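/- Let S = k[x_1,...,x_d] and let f^1,...,f^m be monomials in S. Define φ: S^m → S by φ(e_μ) = f^μ. For each pair μ < ν, set f^{μ,ν} = lcm(f^μ, f^ν) and β_{(μ,ν)} = (f^{μ,ν}/f^ν)·e_ν − (f^{μ,ν}/f^μ)·e_μ. Then the kernel of φ is generated as an S-module by the elements β_{(μ,ν)} for 1 ≤ μ < ν ≤ m. -/

import Mathlib

open MvPolynomial

namespace Stmt0Aux

variable {K : Type*} [Field K] {d m : ℕ}

/-- The set of Koszul syzygies. -/
def B (a : Fin m → (Fin d →₀ ℕ)) : Set (Fin m → MvPolynomial (Fin d) K) :=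
  { b : Fin m → MvPolynomial (Fin d) K | ∃ μ ν : Fin m, μ < ν ∧
      b = Pi.single ν (monomial (a μ ⊔ a ν - a ν) (1 : K))
        - Pi.single μ (monomial (a μ ⊔ a ν - a μ) (1 : K)) }

lemma key (a : Fin m → (Fin d →₀ ℕ)) (μ ν : Fin m) (c : Fin d →₀ ℕ)
    (hμ : a μ ≤ c) (hν : a ν ≤ c) (lam : K) :
    (Pi.single ν (monomial (c - a ν) lam) - Pi.single μ (monomial (c - a μ) lam)
      : Fin m → MvPolynomial (Fin d) K)
      = monomial (c - (a μ ⊔ a ν)) lam •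
        (Pi.single ν (monomial (a μ ⊔ a ν - a ν) (1 : K))
          - Pi.single μ (monomial (a μ ⊔ a ν - a μ) (1 : K))) := by
  rw [smul_sub, ← Pi.single_smul, ← Pi.single_smul, smul_eq_mul, smul_eq_mul,
    monomial_mul, monomial_mul, mul_one,
    tsub_add_tsub_cancel (sup_le hμ hν) le_sup_right,
    tsub_add_tsub_cancel (sup_le hμ hν) le_sup_left]

lemma gen_mem (a : Fin m → (Fin d →₀ ℕ)) (μ ν : Fin m) (hne : μ ≠ ν) (c : Fin d →₀ ℕ)
    (hμ : a μ ≤ c) (hν : a ν ≤ c) (lam : K) :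
    (Pi.single ν (monomial (c - a ν) lam) - Pi.single μ (monomial (c - a μ) lam)
      : Fin m → MvPolynomial (Fin d) K) ∈
      Submodule.span (MvPolynomial (Fin d) K) (B a) := by
  rcases hne.lt_or_gt with h | h
  · rw [key a μ ν c hμ hν lam]
    exact Submodule.smul_mem _ _ (Submodule.subset_span ⟨μ, ν, h, rfl⟩)
  · have : (Pi.single ν (monomial (c - a ν) lam) - Pi.single μ (monomial (c - a μ) lam)
        : Fin m → MvPolynomial (Fin d) K)
        = -(Pi.single μ (monomial (c - a μ) lam) - Pi.single ν (monomial (c - a ν) lam)) := by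
      abel
    rw [this, key a ν μ c hν hμ lam]
    exact Submodule.neg_mem _
      (Submodule.smul_mem _ _ (Submodule.subset_span ⟨ν, μ, h, rfl⟩))

lemma phi_eval (a : Fin m → (Fin d →₀ ℕ)) (μ ν : Fin m) (c : Fin d →₀ ℕ)
    (hμ : a μ ≤ c) (hν : a ν ≤ c) (lam : K) :
    (∑ ρ, ((Pi.single ν (monomial (c - a ν) lam) - Pi.single μ (monomial (c - a μ) lam)
      : Fin m → MvPolynomial (Fin d) K) ρ) * monomial (a ρ) (1 : K)) = 0 := by
  simp only [Pi.sub_apply, sub_mul, Finset.sum_sub_distrib, Pi.single_apply, ite_mul, zero_mul,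
    Finset.sum_ite_eq', Finset.mem_univ, if_true, monomial_mul, mul_one,
    tsub_add_cancel_of_le hν, tsub_add_cancel_of_le hμ, sub_self]

lemma ker_le (a : Fin m → (Fin d →₀ ℕ)) :
    ∀ n (b : Fin m → MvPolynomial (Fin d) K),
      (∑ ρ, (b ρ).support.card) ≤ n →
      (∑ ρ, b ρ * monomial (a ρ) (1 : K)) = 0 →
      b ∈ Submodule.span (MvPolynomial (Fin d) K) (B a) := by
  intro n
  induction n with
  | zero =>
    intro b hcard _
    have hb : b = 0 := by
      funext ρ
      have := (Finset.sum_eq_zero_iff.mp (Nat.le_zero.mp hcard)) ρ (Finset.mem_univ ρ)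
      simpa [Finset.card_eq_zero, support_eq_empty] using this
    rw [hb]; exact Submodule.zero_mem _
  | succ n ih =>
    intro b hcard hker
    classical
    by_cases hb0 : b = 0
    · rw [hb0]; exact Submodule.zero_mem _
    obtain ⟨μ, hμ0⟩ := Function.ne_iff.mp hb0
    obtain ⟨e, he⟩ := support_nonempty.mpr hμ0
    set c : Fin d →₀ ℕ := e + a μ with hc
    set lam : K := coeff e (b μ) with hlam
    have hlam0 : lam ≠ 0 := mem_support_iff.mp he
    have hμc : a μ ≤ c := le_add_self
    have hcμ : c - a μ = e := by rw [hc]; exact add_tsub_cancel_right _ _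
    set t : Fin m → K := fun ρ => if a ρ ≤ c then coeff (c - a ρ) (b ρ) * 1 else 0 with ht
    have hsumt : ∑ ρ, t ρ = 0 := by
      have h := congrArg (coeff c) hker
      rw [coeff_sum, coeff_zero] at h
      simpa only [ht, coeff_mul_monomial'] using h
    have htμ : t μ ≠ 0 := by
      simp only [ht, hμc, if_true, hcμ, mul_one, ← hlam]
      exact hlam0
    -- find another index with nonzero coefficient
    have hrest : ∑ ρ ∈ Finset.univ.erase μ, t ρ ≠ 0 := by
      intro h0
      rw [← Finset.add_sum_erase Finset.univ t (Finset.mem_univ μ), h0, add_zero] at hsumt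
      exact htμ hsumt
    obtain ⟨ν, hνmem, htν⟩ := Finset.exists_ne_zero_of_sum_ne_zero hrest
    have hνμ : ν ≠ μ := (Finset.mem_erase.mp hνmem).1
    have hνc : a ν ≤ c := by
      by_contra h
      simp only [ht, h, if_false] at htν
      exact htν rfl
    have hcν : coeff (c - a ν) (b ν) ≠ 0 := by
      simp only [ht, hνc, if_true, mul_one] at htν
      exact htν
    set g : Fin m → MvPolynomial (Fin d) K :=
      Pi.single ν (monomial (c - a ν) lam) - Pi.single μ (monomial (c - a μ) lam) with hg
    set b' : Fin m → MvPolynomial (Fin d) K := b + g with hb'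
    have hgmem : g ∈ Submodule.span (MvPolynomial (Fin d) K) (B a) :=
      gen_mem a μ ν hνμ.symm c hμc hνc lam
    have hb'ker : (∑ ρ, b' ρ * monomial (a ρ) (1 : K)) = 0 := by
      simp only [hb', Pi.add_apply, add_mul, Finset.sum_add_distrib, hker,
        hg, phi_eval a μ ν c hμc hνc lam, add_zero, zero_add]
    -- support counting
    have hbμ : b' μ = b μ - monomial e lam := by
      simp only [hb', hg, Pi.add_apply, Pi.sub_apply, Pi.neg_apply,
        Pi.single_eq_of_ne hνμ.symm, Pi.single_eq_same, hcμ, zero_sub, sub_eq_add_neg,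
        zero_add]
    have hμsupp : (b' μ).support = (b μ).support.erase e := by
      ext x
      by_cases hx : x = e
      · subst hx
        simp [hbμ, mem_support_iff, coeff_monomial, ← hlam]
      · simp [hbμ, mem_support_iff, coeff_monomial, Ne.symm hx, hx]
    have hμlt : (b' μ).support.card < (b μ).support.card := by
      rw [hμsupp]; exact Finset.card_erase_lt_of_mem he
    have hle : ∀ ρ, (b' ρ).support.card ≤ (b ρ).support.card := by
      intro ρ
      by_cases hρμ : ρ = μ
      · subst hρμ; exact hμlt.le
      by_cases hρν : ρ = ν
      · subst hρν
        have hbν : b' ρ = b ρ + monomial (c - a ρ) lam := by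
          simp only [hb', hg, Pi.add_apply, Pi.sub_apply, Pi.single_eq_same,
            Pi.single_eq_of_ne hρμ, sub_zero]
        apply Finset.card_le_card
        rw [hbν]
        refine support_add.trans (Finset.union_subset subset_rfl ?_)
        rw [support_monomial, if_neg hlam0]
        exact Finset.singleton_subset_iff.mpr (mem_support_iff.mpr hcν)
      · have : b' ρ = b ρ := by
          simp only [hb', hg, Pi.add_apply, Pi.sub_apply, Pi.single_eq_of_ne hρν,
            Pi.single_eq_of_ne hρμ, sub_zero, add_zero]
        rw [this]
    have hlt : ∑ ρ, (b' ρ).support.card < ∑ ρ, (b ρ).support.card :=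
      Finset.sum_lt_sum (fun ρ _ => hle ρ) ⟨μ, Finset.mem_univ μ, hμlt⟩
    have hb'mem := ih b' (Nat.lt_succ_iff.mp (lt_of_lt_of_le hlt hcard)) hb'ker
    have hbeq : b = b' - g := by rw [hb']; abel
    rw [hbeq]
    exact Submodule.sub_mem _ hb'mem hgmem

end Stmt0Aux

/-- Lemma 2.1: the kernel of the map `φ : S^m → S`, `e_μ ↦ f^μ` (the `f^μ` monomials with
exponent vectors `a μ`) is generated by the Koszul-type syzygies
`β_{(μ,ν)} = (f^{μ,ν}/f^ν) e_ν − (f^{μ,ν}/f^μ) e_μ` for `μ < ν`. -/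
theorem stmt0 {K : Type*} [Field K] (d m : ℕ) (hm : 2 ≤ m)
    (a : Fin m → (Fin d →₀ ℕ)) :
    LinearMap.ker (Fintype.linearCombination (MvPolynomial (Fin d) K)
        (fun μ => (monomial (a μ) (1 : K)))) =
      Submodule.span (MvPolynomial (Fin d) K)
        { b : Fin m → MvPolynomial (Fin d) K | ∃ μ ν : Fin m, μ < ν ∧
            b = Pi.single ν (monomial (a μ ⊔ a ν - a ν) (1 : K))
              - Pi.single μ (monomial (a μ ⊔ a ν - a μ) (1 : K)) } := by
  apply le_antisymm
  · intro b hb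
    rw [LinearMap.mem_ker, Fintype.linearCombination_apply] at hb
    simp only [smul_eq_mul] at hb
    exact Stmt0Aux.ker_le a (∑ ρ, (b ρ).support.card) b le_rfl hb
  · rw [Submodule.span_le]
    rintro b ⟨μ, ν, hlt, rfl⟩
    rw [SetLike.mem_coe, LinearMap.mem_ker, Fintype.linearCombination_apply]
    simp only [smul_eq_mul]
    exact Stmt0Aux.phi_eval a μ ν (a μ ⊔ a ν) le_sup_left le_sup_right 1
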